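/- Let τ ∈ ℂ with Im τ > 0. The complex vector space of entire functions Θ : ℂ → ℂ satisfying Θ(z + π) = Θ(z) and Θ(z + πτ) = e^{-2inz} e^{-inπτ} Θ(z) has dimension n over ℂ. -/

import Mathlib

noncomputable section
open Complex Real

/-- The space of entire functions `Θ : ℂ → ℂ` satisfying the quasi-periodicity
conditions `Θ(z + π) = Θ(z)` and `Θ(z + πτ) = e^{-2inz} e^{-inπτ} Θ(z)`. -/
def thetaSpace (n : ℕ) (τ : ℂ) : Submodule ℂ (ℂ → ℂ) where
  carrier := {Θ | Differentiable ℂ Θ ∧ (∀ z, Θ (z + π) = Θ z) ∧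
    (∀ z, Θ (z + π * τ) = Complex.exp (-2 * I * n * z) * Complex.exp (-I * n * π * τ) * Θ z)}
  add_mem' := by
    rintro f g ⟨hf, hf1, hf2⟩ ⟨hg, hg1, hg2⟩
    refine ⟨hf.add hg, fun z => by simp [Pi.add_apply, hf1 z, hg1 z],
      fun z => by simp only [Pi.add_apply, hf2 z, hg2 z]; ring⟩
  zero_mem' := ⟨differentiable_const 0, fun z => rfl, fun z => by simp⟩
  smul_mem' := by
    rintro c f ⟨hf, hf1, hf2⟩
    refine ⟨hf.const_smul c, fun z => by simp [Pi.smul_apply, hf1 z],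
      fun z => by simp only [Pi.smul_apply, hf2 z, smul_eq_mul]; ring⟩

namespace ThetaAux
open MeasureTheory intervalIntegral

/-- The `m`-th Fourier coefficient of `f` along the real axis, with period `π`. -/
def coeff (m : ℤ) (f : ℂ → ℂ) : ℂ :=
  (1 / (π : ℂ)) * ∫ x in (0:ℝ)..π, cexp (-2 * I * m * x) * f x

lemma integral_shift {g : ℂ → ℂ} (hg : Differentiable ℂ g)
    (hp : ∀ z, g (z + π) = g z) (a : ℂ) :
    (∫ x in (0:ℝ)..π, g (x + a)) = ∫ x in (0:ℝ)..π, g x := by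
  set t : ℝ := a.im with ht
  -- step 2 : vertical shift, via Cauchy on the rectangle [0,π] × [0,t]
  have key : (∫ x in (0:ℝ)..π, g x) = ∫ x in (0:ℝ)..π, g (x + t * I) := by
    have H := integral_boundary_rect_eq_zero_of_differentiableOn g 0 (⟨π, t⟩ : ℂ)
      (hg.differentiableOn)
    have hre : (⟨π, t⟩ : ℂ).re = π := rfl
    have him : (⟨π, t⟩ : ℂ).im = t := rfl
    rw [hre, him, Complex.zero_re, Complex.zero_im] at H
    have h34 : (∫ y in (0:ℝ)..t, g ((π:ℝ) + y * I)) = ∫ y in (0:ℝ)..t, g ((0:ℝ) + y * I) := by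
      refine intervalIntegral.integral_congr fun y _ => ?_
      rw [show ((π:ℝ) + (y:ℝ) * I : ℂ) = (y:ℝ) * I + π by push_cast; ring, hp,
        show ((0:ℝ) + (y:ℝ) * I : ℂ) = (y:ℝ) * I by push_cast; ring]
    rw [h34] at H
    have H2 : (∫ x in (0:ℝ)..π, g ((x:ℝ) + (0:ℝ) * I)) = ∫ x in (0:ℝ)..π, g ((x:ℝ) + t * I) := by
      linear_combination H
    calc (∫ x in (0:ℝ)..π, g x)
        = ∫ x in (0:ℝ)..π, g ((x:ℝ) + (0:ℝ) * I) := by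
          refine intervalIntegral.integral_congr fun x _ => ?_
          norm_num
      _ = ∫ x in (0:ℝ)..π, g ((x:ℝ) + t * I) := H2
  -- step 1 : horizontal shift, via periodicity
  have hper : Function.Periodic (fun x : ℝ => g (x + t * I)) π := by
    intro x
    simp only
    rw [show ((x + π : ℝ) : ℂ) + t * I = ((x:ℝ) + t * I) + (π:ℝ) by push_cast; ring, hp]
  have h1 : (∫ x in (0:ℝ)..π, g (x + a))
      = ∫ x in (0:ℝ)..π, (fun y : ℝ => g (y + t * I)) (x + a.re) := by
    refine intervalIntegral.integral_congr fun x _ => ?_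
    simp only
    rw [show ((x + a.re : ℝ) : ℂ) + t * I = (x:ℝ) + ((a.re : ℝ) + t * I) by push_cast; ring]
    rw [ht, Complex.re_add_im]
  rw [h1, intervalIntegral.integral_comp_add_right (fun y : ℝ => g (y + t * I)) a.re,
    zero_add, show π + a.re = a.re + π by ring,
    hper.intervalIntegral_add_eq a.re 0, zero_add, ← key]

lemma coeff_rec {n : ℕ} {τ : ℂ} (f : ℂ → ℂ) (hd : Differentiable ℂ f)
    (h1 : ∀ z, f (z + π) = f z)
    (h2 : ∀ z, f (z + π * τ) = cexp (-2 * I * n * z) * cexp (-I * n * π * τ) * f z)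
    (m : ℤ) :
    coeff (m + n) f = cexp (I * π * τ * (2 * m + n)) * coeff m f := by
  set g : ℂ → ℂ := fun z => cexp (-2 * I * m * z) * f z with hg
  have hgd : Differentiable ℂ g := by
    apply Differentiable.mul _ hd
    apply Differentiable.cexp
    fun_prop
  have hgp : ∀ z, g (z + π) = g z := by
    intro z
    simp only [hg]
    rw [h1, show -2 * I * (m:ℂ) * (z + π) = -2 * I * m * z + ((-m : ℤ) : ℂ) * (2 * π * I) by
      push_cast; ring, Complex.exp_add, Complex.exp_int_mul_two_pi_mul_I, mul_one]
  have key := integral_shift hgd hgp (π * τ)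
  have key2 : cexp (-(I * π * τ * (2 * m + n))) *
      (∫ x in (0:ℝ)..π, cexp (-2 * I * (((m + n : ℤ)) : ℂ) * x) * f x) =
      ∫ x in (0:ℝ)..π, cexp (-2 * I * (m : ℂ) * x) * f x := by
    rw [← intervalIntegral.integral_const_mul, ← key]
    refine intervalIntegral.integral_congr fun x _ => ?_
    simp only [hg]
    rw [h2]
    symm
    have hexp : cexp (-2 * I * (m:ℂ) * ((x:ℂ) + π * τ)) * cexp (-2 * I * (n:ℂ) * (x:ℂ))
        * cexp (-I * (n:ℂ) * π * τ)
        = cexp (-(I * π * τ * (2 * m + n))) * cexp (-2 * I * (((m + n : ℤ)) : ℂ) * x) := by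
      rw [← Complex.exp_add, ← Complex.exp_add, ← Complex.exp_add]
      congr 1
      push_cast
      ring
    calc cexp (-2 * I * (m:ℂ) * ((x:ℂ) + π * τ)) *
          (cexp (-2 * I * (n:ℂ) * (x:ℂ)) * cexp (-I * (n:ℂ) * π * τ) * f x)
        = (cexp (-2 * I * (m:ℂ) * ((x:ℂ) + π * τ)) * cexp (-2 * I * (n:ℂ) * (x:ℂ))
            * cexp (-I * (n:ℂ) * π * τ)) * f x := by ring
      _ = (cexp (-(I * π * τ * (2 * m + n))) * cexp (-2 * I * (((m + n : ℤ)) : ℂ) * x)) * f x := by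
          rw [hexp]
      _ = cexp (-(I * π * τ * (2 * m + n))) * (cexp (-2 * I * (((m + n : ℤ)) : ℂ) * x) * f x) := by
          ring
  have hc : cexp (I * π * τ * (2 * m + n)) * cexp (-(I * π * τ * (2 * m + n))) = 1 := by
    rw [← Complex.exp_add]; simp
  simp only [coeff]
  linear_combination (1 / (π:ℂ)) * cexp (I * ↑π * τ * (2 * ↑m + ↑n)) * key2 -
    (1 / (π:ℂ)) * (∫ x in (0:ℝ)..π, cexp (-2 * I * (((m + n : ℤ)) : ℂ) * x) * f x) * hc

lemma eq_zero_of_coeff_eq_zero {f : ℂ → ℂ} (hd : Differentiable ℂ f)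
    (hp : ∀ z, f (z + π) = f z) (h : ∀ m : ℤ, coeff m f = 0) : f = 0 := by
  haveI : Fact (0 < π) := ⟨Real.pi_pos⟩
  set g : ℝ → ℂ := fun x => f x with hgdef
  have hper : Function.Periodic g π := by
    intro x
    simp only [hgdef]
    push_cast
    exact hp x
  have hgc : Continuous g := hd.continuous.comp Complex.continuous_ofReal
  have hFc : Continuous hper.lift := hgc.quotient_liftOn' _
  set Fc : C(AddCircle π, ℂ) := ⟨hper.lift, hFc⟩ with hFcdef
  have hcoeff : ∀ m : ℤ, fourierCoeff (⇑Fc) m = coeff m f := by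
    intro m
    rw [fourierCoeff_eq_intervalIntegral (⇑Fc) m 0, zero_add]
    rw [coeff, Complex.real_smul, Complex.ofReal_div, Complex.ofReal_one]
    congr 1
    refine intervalIntegral.integral_congr fun x _ => ?_
    rw [smul_eq_mul]
    have h1 : Fc ((x : ℝ) : AddCircle π) = f x := rfl
    rw [h1, fourier_coe_apply]
    have hπ : (π : ℂ) ≠ 0 := Complex.ofReal_ne_zero.mpr Real.pi_ne_zero
    rw [show (2 * (π:ℂ) * Complex.I * ((-m : ℤ) : ℂ) * (x:ℂ) / (π:ℂ)) = -2 * I * (m:ℂ) * (x:ℂ) by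
      field_simp; push_cast; ring]
  have hsum : Summable (fourierCoeff (⇑Fc)) :=
    (summable_zero : Summable (fun _ : ℤ => (0:ℂ))).congr fun m => by rw [hcoeff, h]
  have hzero : ∀ q : AddCircle π, Fc q = 0 := by
    intro q
    have hps := has_pointwise_sum_fourier_series_of_summable hsum q
    have : (fun i : ℤ => fourierCoeff (⇑Fc) i • fourier i q) = fun _ => (0 : ℂ) :=
      funext fun i => by rw [hcoeff, h, zero_smul]
    rw [this] at hps
    exact (hasSum_zero.unique hps).symm
  have hreal : ∀ x : ℝ, f x = 0 := fun x => hzero ((x : ℝ) : AddCircle π)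
  -- identity theorem
  have hA : AnalyticOnNhd ℂ f Set.univ :=
    hd.differentiableOn.analyticOnNhd isOpen_univ
  have hfreq : ∃ᶠ z in nhdsWithin (0:ℂ) {(0:ℂ)}ᶜ, f z = 0 := by
    have ht : Filter.Tendsto (fun k : ℕ => (((k:ℝ) + 1)⁻¹ : ℂ)) Filter.atTop
        (nhdsWithin (0:ℂ) {(0:ℂ)}ᶜ) := by
      apply tendsto_nhdsWithin_of_tendsto_nhds_of_eventually_within
      · have hr : Filter.Tendsto (fun k : ℕ => ((k:ℝ) + 1)⁻¹) Filter.atTop (nhds 0) :=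
          tendsto_one_div_add_atTop_nhds_zero_nat.congr fun k => by rw [one_div]
        have h2 := (Complex.continuous_ofReal.tendsto 0).comp hr
        rw [Complex.ofReal_zero] at h2
        exact h2.congr fun k => by simp only [Function.comp_apply]; push_cast; ring
      · refine Filter.Eventually.of_forall fun k => ?_
        simp only [Set.mem_compl_iff, Set.mem_singleton_iff]
        intro hk
        have : ((k:ℝ) + 1)⁻¹ = 0 := by exact_mod_cast hk
        have : (0:ℝ) < ((k:ℝ) + 1)⁻¹ := by positivity
        simp_all
    refine ht.frequently ?_
    refine Filter.Eventually.frequently (Filter.Eventually.of_forall fun k => ?_)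
    exact_mod_cast hreal (((k:ℝ) + 1)⁻¹)
  have := hA.eqOn_zero_of_preconnected_of_frequently_eq_zero isPreconnected_univ
    (Set.mem_univ (0:ℂ)) hfreq
  funext z
  exact this (Set.mem_univ z)

/-- basis theta function -/
def theta (n : ℕ) (τ : ℂ) (j : ℕ) : ℂ → ℂ :=
  fun z => cexp (2 * I * j * z) * jacobiTheta₂ ((n : ℂ) * z / π + j * τ) ((n : ℂ) * τ)

lemma im_nτ {n : ℕ} {τ : ℂ} (hn : 0 < n) (hτ : 0 < τ.im) : 0 < ((n : ℂ) * τ).im := by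
  have : ((n : ℂ) * τ).im = n * τ.im := by simp [Complex.mul_im]
  rw [this]
  exact mul_pos (by exact_mod_cast hn) hτ

lemma jacobiTheta₂_add_nat (w τ' : ℂ) (k : ℕ) : jacobiTheta₂ (w + k) τ' = jacobiTheta₂ w τ' := by
  induction k with
  | zero => simp
  | succ k ih =>
    rw [show w + ((k + 1 : ℕ) : ℂ) = (w + k) + 1 by push_cast; ring, jacobiTheta₂_add_left, ih]

lemma theta_diff (n : ℕ) (hn : 0 < n) (τ : ℂ) (hτ : 0 < τ.im) (j : ℕ) :
    Differentiable ℂ (theta n τ j) := by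
  intro z
  apply DifferentiableAt.mul
  · apply DifferentiableAt.cexp
    fun_prop
  · exact (differentiableAt_jacobiTheta₂_fst _ (im_nτ hn hτ)).comp z (by fun_prop)

lemma theta_periodic (n : ℕ) (τ : ℂ) (j : ℕ) (z : ℂ) :
    theta n τ j (z + π) = theta n τ j z := by
  have hπ : (π : ℂ) ≠ 0 := Complex.ofReal_ne_zero.mpr Real.pi_ne_zero
  simp only [theta]
  rw [show (n : ℂ) * (z + π) / π + j * τ = ((n : ℂ) * z / π + j * τ) + (n : ℕ) by
    field_simp; ring, jacobiTheta₂_add_nat]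
  rw [show 2 * I * (j : ℂ) * (z + π) = 2 * I * j * z + ((j : ℤ) : ℂ) * (2 * π * I) by
    push_cast; ring, Complex.exp_add, Complex.exp_int_mul_two_pi_mul_I, mul_one]

lemma theta_quasi (n : ℕ) (τ : ℂ) (j : ℕ) (z : ℂ) :
    theta n τ j (z + π * τ) =
      cexp (-2 * I * n * z) * cexp (-I * n * π * τ) * theta n τ j z := by
  have hπ : (π : ℂ) ≠ 0 := Complex.ofReal_ne_zero.mpr Real.pi_ne_zero
  simp only [theta]
  rw [show (n : ℂ) * (z + π * τ) / π + j * τ = ((n : ℂ) * z / π + j * τ) + (n : ℂ) * τ by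
    field_simp; ring, jacobiTheta₂_add_left']
  rw [← mul_assoc, ← Complex.exp_add]
  rw [show cexp (-2 * I * (n:ℂ) * z) * cexp (-I * (n:ℂ) * π * τ) *
      (cexp (2 * I * (j:ℂ) * z) * jacobiTheta₂ ((n : ℂ) * z / π + j * τ) ((n : ℂ) * τ))
      = cexp (-2 * I * (n:ℂ) * z + -I * (n:ℂ) * π * τ + 2 * I * (j:ℂ) * z) *
        jacobiTheta₂ ((n : ℂ) * z / π + j * τ) ((n : ℂ) * τ) by
    rw [Complex.exp_add, Complex.exp_add]; ring]
  congr 2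
  field_simp
  ring

lemma coeff_theta (n : ℕ) (hn : 0 < n) (τ : ℂ) (hτ : 0 < τ.im) (m j : ℕ)
    (hm : m < n) (hj : j < n) :
    coeff m (theta n τ j) = if m = j then 1 else 0 := by
  have hπ : (π : ℂ) ≠ 0 := Complex.ofReal_ne_zero.mpr Real.pi_ne_zero
  have hτ' := im_nτ hn hτ
  set τ' : ℂ := (n : ℂ) * τ with hτ'def
  set w : ℝ → ℂ := fun x => (n : ℂ) * x / π + j * τ with hwdef
  set F : ℤ → ℝ → ℂ := fun k x => jacobiTheta₂_term k (w x) τ' * cexp (2 * I * ((j:ℂ) - m) * x)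
    with hFdef
  -- pointwise expansion of the integrand
  have hs : ∀ x : ℝ, HasSum (fun k => F k x)
      (cexp (-2 * I * ((m : ℤ) : ℂ) * x) * theta n τ j x) := by
    intro x
    have h0 := (hasSum_jacobiTheta₂_term (w x) hτ').mul_right (cexp (2 * I * ((j:ℂ) - m) * x))
    convert h0 using 1
    · rfl
    simp only [theta, hwdef]
    rw [show cexp (-2 * I * ((m : ℤ) : ℂ) * x) * (cexp (2 * I * (j:ℂ) * x) *
        jacobiTheta₂ ((n : ℂ) * x / π + j * τ) τ')
        = (cexp (-2 * I * ((m : ℤ) : ℂ) * x) * cexp (2 * I * (j:ℂ) * x)) *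
          jacobiTheta₂ ((n : ℂ) * x / π + j * τ) τ' by ring, ← Complex.exp_add]
    rw [mul_comm]
    congr 2
    push_cast
    ring
  -- value of each term's integral
  have hterm : ∀ k : ℤ, (∫ x in (0:ℝ)..π, F k x)
      = if k = 0 ∧ j = m then (π : ℂ) else 0 := by
    intro k
    have hFval : ∀ x : ℝ, F k x
        = cexp (2 * π * I * k * (j * τ) + π * I * k ^ 2 * τ') *
          cexp (2 * I * ((k * n + j - m : ℤ) : ℂ) * x) := by
      intro x
      simp only [hFdef, jacobiTheta₂_term, hwdef]
      rw [← Complex.exp_add, ← Complex.exp_add]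
      congr 1
      field_simp
      push_cast
      ring
    simp only [hFval]
    rw [intervalIntegral.integral_const_mul]
    by_cases hk0 : (k * n + j - m : ℤ) = 0
    · have hk1 : k = 0 := by
        by_contra hk
        have h1 : 1 ≤ |k| := Int.one_le_abs (by simpa using hk)
        have h2 : |(k * n : ℤ)| < n := by
          have h2' : (k * n : ℤ) = (m : ℤ) - j := by omega
          rw [h2', abs_lt]
          omega
        rw [abs_mul] at h2
        have h3 : |(n : ℤ)| = n := abs_of_nonneg (by positivity)
        rw [h3] at h2
        nlinarith [Int.ofNat_lt.mpr hn]
      have hk2 : j = m := by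
        rw [hk1, zero_mul] at hk0
        omega
      have hk : k = 0 ∧ j = m := ⟨hk1, hk2⟩
      rw [if_pos hk, hk0]
      obtain ⟨hk1, hk2⟩ := hk
      rw [hk1]
      push_cast
      simp only [mul_zero, zero_mul, Complex.exp_zero, one_mul]
      norm_num
    · have hne : ¬(k = 0 ∧ j = m) := by
        intro ⟨h1', h2'⟩
        apply hk0
        rw [h1']
        omega
      rw [if_neg hne]
      have hc : (2 * I * ((k * n + j - m : ℤ) : ℂ)) ≠ 0 := by
        simp only [mul_ne_zero_iff]
        refine ⟨by norm_num [Complex.I_ne_zero], ?_⟩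
        exact_mod_cast hk0
      rw [integral_exp_mul_complex hc]
      rw [show 2 * I * ((k * n + j - m : ℤ) : ℂ) * (π : ℂ)
          = ((k * n + j - m : ℤ) : ℂ) * (2 * π * I) by push_cast; ring]
      rw [Complex.exp_int_mul_two_pi_mul_I]
      simp
  -- summability of integrals of norms
  have hnormval : ∀ (k : ℤ) (x : ℝ), ‖F k x‖ = ‖jacobiTheta₂_term k ((j : ℂ) * τ) τ'‖ := by
    intro k x
    simp only [hFdef]
    rw [norm_mul, norm_jacobiTheta₂_term, norm_jacobiTheta₂_term]
    have h1 : (w x).im = ((j : ℂ) * τ).im := by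
      simp [hwdef, Complex.add_im, Complex.div_im, Complex.mul_im]
    rw [h1]
    have h2 : ‖cexp (2 * I * ((j:ℂ) - m) * x)‖ = 1 := by
      rw [Complex.norm_exp]
      have : (2 * I * ((j:ℂ) - m) * x).re = 0 := by
        simp [Complex.mul_re, Complex.mul_im]
      rw [this, Real.exp_zero]
    rw [h2, mul_one]
  have hFcont : ∀ k : ℤ, Continuous (F k) := by
    intro k
    simp only [hFdef, jacobiTheta₂_term, hwdef]
    fun_prop
  have hint : ∀ k : ℤ, IntegrableOn (F k) (Set.Ioc 0 π) volume :=
    fun k => (hFcont k).integrableOn_Ioc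
  have hsummable : Summable fun k : ℤ => ∫ x in Set.Ioc (0:ℝ) π, ‖F k x‖ := by
    have h4 : Summable fun k : ℤ => ‖jacobiTheta₂_term k ((j : ℂ) * τ) τ'‖ :=
      summable_norm_iff.mpr ((summable_jacobiTheta₂_term_iff _ _).mpr hτ')
    apply Summable.congr (h4.mul_left (volume (Set.Ioc (0:ℝ) π)).toReal)
    intro k
    rw [show (∫ x in Set.Ioc (0:ℝ) π, ‖F k x‖) = ∫ _ in Set.Ioc (0:ℝ) π,
      ‖jacobiTheta₂_term k ((j : ℂ) * τ) τ'‖ from setIntegral_congr_fun measurableSet_Ioc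
        fun x _ => hnormval k x]
    rw [setIntegral_const, smul_eq_mul]
    rfl
  -- assemble
  have hswap : (∫ x in (0:ℝ)..π, cexp (-2 * I * ((m : ℤ) : ℂ) * x) * theta n τ j x)
      = ∑' k : ℤ, ∫ x in (0:ℝ)..π, F k x := by
    rw [intervalIntegral.integral_of_le Real.pi_pos.le]
    rw [show (fun x : ℝ => cexp (-2 * I * ((m : ℤ) : ℂ) * x) * theta n τ j x)
        = fun x : ℝ => ∑' k : ℤ, F k x from funext fun x => ((hs x).tsum_eq).symm]
    rw [← integral_tsum_of_summable_integral_norm hint hsummable]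
    exact tsum_congr fun k => (intervalIntegral.integral_of_le Real.pi_pos.le).symm
  rw [coeff, hswap]
  simp only [hterm]
  by_cases hjm : j = m
  · simp only [hjm, and_true]
    rw [tsum_ite_eq (0 : ℤ) (fun _ => ((π : ℝ) : ℂ))]
    rw [if_pos trivial]
    field_simp
  · have hz : ∀ k : ℤ, (if k = 0 ∧ j = m then ((π : ℝ) : ℂ) else 0) = 0 := by
      intro k
      rw [if_neg]
      rintro ⟨-, h⟩
      exact hjm h
    simp only [hz, tsum_zero, mul_zero]
    rw [if_neg (fun h => hjm h.symm)]

lemma coeff_add (m : ℤ) {f g : ℂ → ℂ} (hf : Continuous f) (hg : Continuous g) :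
    coeff m (f + g) = coeff m f + coeff m g := by
  have hc : Continuous fun x : ℝ => cexp (-2 * I * (m : ℂ) * x) := by fun_prop
  simp only [coeff, Pi.add_apply]
  have hif : IntervalIntegrable (fun x : ℝ => cexp (-2 * I * (m:ℂ) * x) * f x) volume 0 π :=
    (hc.mul (hf.comp Complex.continuous_ofReal)).intervalIntegrable 0 π
  have hig : IntervalIntegrable (fun x : ℝ => cexp (-2 * I * (m:ℂ) * x) * g x) volume 0 π :=
    (hc.mul (hg.comp Complex.continuous_ofReal)).intervalIntegrable 0 π
  rw [show (∫ x in (0:ℝ)..π, cexp (-2 * I * (m:ℂ) * x) * (f x + g x))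
      = ∫ x in (0:ℝ)..π, (cexp (-2 * I * (m:ℂ) * x) * f x + cexp (-2 * I * (m:ℂ) * x) * g x)
      from intervalIntegral.integral_congr fun x _ => by ring]
  rw [intervalIntegral.integral_add hif hig]
  ring

lemma coeff_smul (m : ℤ) (c : ℂ) (f : ℂ → ℂ) :
    coeff m (c • f) = c * coeff m f := by
  simp only [coeff, Pi.smul_apply, smul_eq_mul]
  rw [show (∫ x in (0:ℝ)..π, cexp (-2 * I * (m:ℂ) * x) * (c * f x))
      = ∫ x in (0:ℝ)..π, c * (cexp (-2 * I * (m:ℂ) * x) * f x)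
      from intervalIntegral.integral_congr fun x _ => by ring]
  rw [intervalIntegral.integral_const_mul]
  ring

lemma coeff_all {n : ℕ} (hn : 0 < n) {τ : ℂ} {f : ℂ → ℂ} (hd : Differentiable ℂ f)
    (h1 : ∀ z, f (z + π) = f z)
    (h2 : ∀ z, f (z + π * τ) = cexp (-2 * I * n * z) * cexp (-I * n * π * τ) * f z)
    (h0 : ∀ j : ℕ, j < n → coeff (j : ℤ) f = 0) (m : ℤ) : coeff m f = 0 := by
  have key : ∀ k : ℤ, ∀ r : ℤ, 0 ≤ r → r < n → coeff (r + k * n) f = 0 := by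
    intro k
    induction k using Int.induction_on with
    | zero =>
      intro r hr0 hrn
      rw [zero_mul, add_zero]
      have hr : r = ((r.toNat : ℕ) : ℤ) := (Int.toNat_of_nonneg hr0).symm
      rw [hr]
      exact h0 r.toNat (by omega)
    | succ k ih =>
      intro r hr0 hrn
      rw [show r + ((k : ℤ) + 1) * n = (r + k * n) + (n : ℤ) by ring,
        coeff_rec f hd h1 h2 (r + k * n), ih r hr0 hrn, mul_zero]
    | pred k ih =>
      intro r hr0 hrn
      have hrec := coeff_rec f hd h1 h2 (r + (-(k : ℤ) - 1) * n)
      rw [show r + (-(k : ℤ) - 1) * n + (n : ℤ) = r + (-(k : ℤ)) * n by ring,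
        ih r hr0 hrn] at hrec
      rcases mul_eq_zero.mp hrec.symm with h | h
      · exact absurd h (Complex.exp_ne_zero _)
      · exact h
  have hm := key (m / n) (m % n) (Int.emod_nonneg m (by exact_mod_cast hn.ne'))
    (Int.emod_lt_of_pos m (by exact_mod_cast hn))
  rwa [show m % (n : ℤ) + m / (n : ℤ) * (n : ℤ) = m % n + n * (m / n) by ring,
    Int.emod_add_mul_ediv] at hm

end ThetaAux

open ThetaAux in
/-- For `n ≥ 1` and `Im τ > 0`, the space of such theta functions has complex
dimension `n`. -/
theorem thetaSpace_finrank (n : ℕ) (hn : 0 < n) (τ : ℂ) (hτ : 0 < τ.im) :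
    Module.finrank ℂ (thetaSpace n τ) = n := by
  classical
  let Φ : thetaSpace n τ →ₗ[ℂ] (Fin n → ℂ) :=
    { toFun := fun f i => coeff ((i : ℕ) : ℤ) f.1
      map_add' := by
        intro f g
        funext i
        exact coeff_add _ f.2.1.continuous g.2.1.continuous
      map_smul' := by
        intro c f
        funext i
        exact coeff_smul _ c f.1 }
  have hker : ∀ f : thetaSpace n τ, Φ f = 0 → f = 0 := by
    intro f hf0
    obtain ⟨hd, h1, h2⟩ := f.2
    have h0 : ∀ j : ℕ, j < n → coeff (j : ℤ) f.1 = 0 := by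
      intro j hj
      exact congrFun hf0 ⟨j, hj⟩
    have hall : ∀ m : ℤ, coeff m f.1 = 0 := fun m => coeff_all hn hd h1 h2 h0 m
    exact Subtype.ext (eq_zero_of_coeff_eq_zero hd h1 hall)
  have hinj : Function.Injective Φ :=
    LinearMap.ker_eq_bot.mp (LinearMap.ker_eq_bot'.mpr hker)
  have hmem : ∀ j : ℕ, theta n τ j ∈ thetaSpace n τ := fun j =>
    ⟨theta_diff n hn τ hτ j, theta_periodic n τ j, theta_quasi n τ j⟩
  have hsurj : Function.Surjective Φ := by
    rw [← LinearMap.range_eq_top, ← top_le_iff, ← (Pi.basisFun ℂ (Fin n)).span_eq,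
      Submodule.span_le]
    rintro x ⟨i, rfl⟩
    refine ⟨⟨theta n τ i, hmem i⟩, ?_⟩
    funext j
    have hval : Φ ⟨theta n τ i, hmem i⟩ j = coeff ((j : ℕ) : ℤ) (theta n τ i) := rfl
    rw [hval, coeff_theta n hn τ hτ j i j.2 i.2, Pi.basisFun_apply]
    by_cases h : j = i
    · rw [if_pos (by rw [h]), h, Pi.single_eq_same]
    · rw [if_neg (fun hh => h (Fin.ext hh)), Pi.single_eq_of_ne h]
  have e : (thetaSpace n τ) ≃ₗ[ℂ] (Fin n → ℂ) := LinearEquiv.ofBijective Φ ⟨hinj, hsurj⟩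
  rw [e.finrank_eq, Module.finrank_fin_fun]
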